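/- Let X be a nonempty finite type, let p be a probability mass function on X, let δ be a real number with 0 < δ ≤ 1/8, let ξ : X → ℝ satisfy |ξ x − 1| ≤ δ for all x, and set h x = p x · ξ x. Let q* be a probability mass function on X minimizing the perturbed Jensen–Shannon loss L(q) = ∑_{x∈X} [ p x · log(h x/(h x + q x)) + q x · log(q x/(q x + h x)) ] over all probability mass functions q on X. Then for every x, |q* x / p x − 1| ≤ 16·δ. -/

import Mathlib

open Finset

section stmt9aux

lemma aux_hasDerivAt_F (P H : ℝ) (hH : 0 < H) {t : ℝ} (ht : 0 < t) :
    HasDerivAt (fun s => P * Real.log (H / (H + s)) + s * Real.log (s / (s + H)))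
      (Real.log t - Real.log (t + H) + (H - P) / (t + H)) t := by
  have hHt : (0:ℝ) < H + t := by linarith
  have h1 : HasDerivAt (fun s : ℝ => H + s) 1 t := by
    simpa using (hasDerivAt_id t).const_add H
  have h1' : HasDerivAt (fun s : ℝ => Real.log (H + s)) (1 / (H + t)) t := by
    simpa using h1.log (ne_of_gt hHt)
  have h2 : HasDerivAt (fun s : ℝ => s + H) 1 t := by
    simpa using (hasDerivAt_id t).add_const H
  have h2' : HasDerivAt (fun s : ℝ => Real.log (s + H)) (1 / (t + H)) t := by
    simpa using h2.log (by linarith)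
  have h3 : HasDerivAt Real.log t⁻¹ t := Real.hasDerivAt_log (ne_of_gt ht)
  have hmain : HasDerivAt
      (fun s => P * (Real.log H - Real.log (H + s)) + s * (Real.log s - Real.log (s + H)))
      (P * (0 - 1 / (H + t)) + (1 * (Real.log t - Real.log (t + H)) + t * (t⁻¹ - 1 / (t + H)))) t := by
    exact (((hasDerivAt_const t (Real.log H)).sub h1').const_mul P).add
      ((hasDerivAt_id t).mul (h3.sub h2'))
  have heq : (fun s => P * Real.log (H / (H + s)) + s * Real.log (s / (s + H)))
      =ᶠ[nhds t] (fun s => P * (Real.log H - Real.log (H + s)) + s * (Real.log s - Real.log (s + H))) := by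
    filter_upwards [Ioi_mem_nhds ht] with s hs
    have hs0 : (0:ℝ) < s := hs
    rw [Real.log_div (ne_of_gt hH) (by positivity), Real.log_div (ne_of_gt hs0) (by positivity)]
  have := hmain.congr_of_eventuallyEq heq
  refine this.congr_deriv ?_
  field_simp
  ring

lemma aux_lagrange {X : Type*} [Fintype X]
    (p h qs : X → ℝ) (hhp : ∀ z, 0 < h z) (hqs : ∀ z, 0 < qs z) (hqss : ∑ z, qs z = 1)
    (hmin : ∀ q : X → ℝ, (∀ z, 0 < q z) → (∑ z, q z = 1) →
      (∑ z, (p z * Real.log (h z / (h z + qs z)) + qs z * Real.log (qs z / (qs z + h z)))) ≤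
      (∑ z, (p z * Real.log (h z / (h z + q z)) + q z * Real.log (q z / (q z + h z)))))
    (x y : X) :
    Real.log (qs x) - Real.log (qs x + h x) + (h x - p x) / (qs x + h x)
      = Real.log (qs y) - Real.log (qs y + h y) + (h y - p y) / (qs y + h y) := by
  classical
  by_cases hxy : x = y
  · rw [hxy]
  set F : X → ℝ → ℝ := fun z t => p z * Real.log (h z / (h z + t)) + t * Real.log (t / (t + h z))
    with hF
  set G : ℝ → ℝ := fun ε => F x (qs x + ε) + F y (qs y - ε) with hG
  have hmem : Set.Ioo (-qs x) (qs y) ∈ nhds (0:ℝ) :=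
    Ioo_mem_nhds (by linarith [hqs x]) (hqs y)
  -- local min of G at 0
  have hlocmin : IsLocalMin G 0 := by
    filter_upwards [hmem] with ε hε
    obtain ⟨hε1, hε2⟩ := hε
    set q : X → ℝ := fun z => qs z + (if z = x then ε else 0) - (if z = y then ε else 0) with hq
    have hqpos : ∀ z, 0 < q z := by
      intro z
      by_cases hzx : z = x
      · simp [hq, hzx, hxy]
        linarith
      · by_cases hzy : z = y
        · have hyx : ¬ (y = x) := fun hh => hxy hh.symm
          simp [hq, hzx, hzy, hyx]
          linarith [hqs y]
        · simp [hq, hzx, hzy]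
          exact hqs z
    have hqsum : ∑ z, q z = 1 := by
      simp only [hq, Finset.sum_sub_distrib, Finset.sum_add_distrib,
        Finset.sum_ite_eq', Finset.mem_univ, if_true, hqss]
      ring
    have hle := hmin q hqpos hqsum
    have hdiff : ∑ z, (F z (q z) - F z (qs z))
        = (F x (q x) - F x (qs x)) + (F y (q y) - F y (qs y)) := by
      apply Fintype.sum_eq_add x y hxy
      intro z ⟨hzx, hzy⟩
      have : q z = qs z := by simp [hq, hzx, hzy]
      rw [this]; ring
    have hqx : q x = qs x + ε := by simp [hq, hxy]
    have hqy : q y = qs y - ε := by simp [hq, Ne.symm hxy]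
    have h0 : (0:ℝ) ≤ ∑ z, (F z (q z) - F z (qs z)) := by
      rw [Finset.sum_sub_distrib]
      exact sub_nonneg.mpr hle
    rw [hdiff, hqx, hqy] at h0
    simp only [hG, IsMinFilter]
    simp only [add_zero, sub_zero]
    linarith
  -- derivative of G at 0
  have hdx : HasDerivAt (fun ε : ℝ => F x (qs x + ε))
      (Real.log (qs x) - Real.log (qs x + h x) + (h x - p x) / (qs x + h x)) 0 := by
    have hinner : HasDerivAt (fun ε : ℝ => qs x + ε) 1 0 := by
      simpa using (hasDerivAt_id (0:ℝ)).const_add (qs x)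
    have houter := aux_hasDerivAt_F (p x) (h x) (hhp x) (hqs x)
    have := HasDerivAt.comp (0:ℝ) (by simpa using houter) hinner
    exact this.congr_deriv (mul_one _)
  have hdy : HasDerivAt (fun ε : ℝ => F y (qs y - ε))
      (-(Real.log (qs y) - Real.log (qs y + h y) + (h y - p y) / (qs y + h y))) 0 := by
    have hinner : HasDerivAt (fun ε : ℝ => qs y - ε) (-1) 0 := by
      exact (hasDerivAt_id' (0:ℝ)).const_sub (qs y)
    have houter := aux_hasDerivAt_F (p y) (h y) (hhp y) (hqs y)
    have := HasDerivAt.comp (0:ℝ) (by simpa using houter) hinner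
    exact this.congr_deriv (by ring)
  have hdG : HasDerivAt G
      ((Real.log (qs x) - Real.log (qs x + h x) + (h x - p x) / (qs x + h x))
        + -(Real.log (qs y) - Real.log (qs y + h y) + (h y - p y) / (qs y + h y))) 0 :=
    hdx.add hdy
  have := hlocmin.deriv_eq_zero
  rw [hdG.deriv] at this
  linarith

lemma aux_final1 (δ : ℝ) (h0 : 0 < δ) (h8 : δ ≤ 1/8) :
    -Real.log (2-δ) + δ/(1-δ) <
      Real.log ((1+16*δ)/(2+17*δ)) - δ*(1+δ)/((1-δ)*(2+17*δ)) := by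
  have d1 : (0:ℝ) < 1-δ := by linarith
  have d2 : (0:ℝ) < 2+17*δ := by linarith
  have d3 : (0:ℝ) < 1+16*δ := by linarith
  have d4 : (0:ℝ) < 2-δ := by linarith
  have hzpos : (0:ℝ) < (1+16*δ)*(2-δ)/(2+17*δ) := by positivity
  have hlog : 1 - ((1+16*δ)*(2-δ)/(2+17*δ))⁻¹ ≤ Real.log ((1+16*δ)*(2-δ)/(2+17*δ)) :=
    Real.one_sub_inv_le_log_of_pos hzpos
  have hsplit : Real.log ((1+16*δ)*(2-δ)/(2+17*δ))
      = Real.log ((1+16*δ)/(2+17*δ)) + Real.log (2-δ) := by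
    rw [← Real.log_mul (by positivity) (ne_of_gt d4)]
    ring_nf
  have e2 : 1 - ((1+16*δ)*(2-δ)/(2+17*δ))⁻¹ = (14*δ-16*δ^2)/((1+16*δ)*(2-δ)) := by
    field_simp
    ring
  have hpoly : δ/(1-δ) + δ*(1+δ)/((1-δ)*(2+17*δ)) < (14*δ-16*δ^2)/((1+16*δ)*(2-δ)) := by
    have e1 : δ/(1-δ) + δ*(1+δ)/((1-δ)*(2+17*δ)) = δ*(3+18*δ)/((1-δ)*(2+17*δ)) := by
      field_simp
      ring
    rw [e1, div_lt_div_iff₀ (by positivity) (by positivity)]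
    nlinarith [sq_nonneg δ, mul_pos h0 h0]
  rw [hsplit] at hlog
  rw [e2] at hlog
  linarith

lemma aux_final2 (δ : ℝ) (h0 : 0 < δ) (h16 : 16*δ < 1) :
    Real.log ((1-16*δ)/(2-17*δ)) + δ/(1-δ) <
      -Real.log (2+δ) - δ*(1+δ)/((1-δ)*(2+δ)) := by
  have d1 : (0:ℝ) < 1-δ := by linarith
  have d2 : (0:ℝ) < 2-17*δ := by linarith
  have d3 : (0:ℝ) < 1-16*δ := by linarith
  have d4 : (0:ℝ) < 2+δ := by linarith
  have hzpos : (0:ℝ) < (2-17*δ)/((1-16*δ)*(2+δ)) := by positivity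
  have hlog : 1 - ((2-17*δ)/((1-16*δ)*(2+δ)))⁻¹ ≤ Real.log ((2-17*δ)/((1-16*δ)*(2+δ))) :=
    Real.one_sub_inv_le_log_of_pos hzpos
  have hsplit : Real.log ((2-17*δ)/((1-16*δ)*(2+δ)))
      = -Real.log ((1-16*δ)/(2-17*δ)) - Real.log (2+δ) := by
    rw [show (2-17*δ)/((1-16*δ)*(2+δ)) = ((1-16*δ)/(2-17*δ))⁻¹ * (2+δ)⁻¹ by
      field_simp]
    rw [Real.log_mul (by positivity) (by positivity), Real.log_inv, Real.log_inv]
    ring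
  have e2 : 1 - ((2-17*δ)/((1-16*δ)*(2+δ)))⁻¹ = (14*δ+16*δ^2)/(2-17*δ) := by
    field_simp
    ring
  have hpoly : δ/(1-δ) + δ*(1+δ)/((1-δ)*(2+δ)) < (14*δ+16*δ^2)/(2-17*δ) := by
    have e1 : δ/(1-δ) + δ*(1+δ)/((1-δ)*(2+δ)) = δ*(3+2*δ)/((1-δ)*(2+δ)) := by
      field_simp
      ring
    rw [e1, div_lt_div_iff₀ (by positivity) (by positivity)]
    nlinarith [sq_nonneg δ, mul_pos h0 h0, mul_pos (mul_pos h0 h0) h0,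
      mul_pos (mul_pos h0 h0) (mul_pos h0 h0)]
  rw [hsplit, e2] at hlog
  linarith

end stmt9aux

set_option maxHeartbeats 1000000 in
/-- Theorem 2 (Suboptimality Bound for a Single Discriminator): the pmf `q*`
minimizing the perturbed Jensen–Shannon loss with `h = p·ξ`, `|ξ x − 1| ≤ δ ≤ 1/8`,
satisfies `|q* x / p x − 1| ≤ 16δ` for all `x`. -/
theorem stmt_9 {X : Type*} [Fintype X] [Nonempty X]
    (p : X → ℝ) (hp : ∀ x, 0 < p x) (hps : ∑ x, p x = 1)
    (δ : ℝ) (hδ0 : 0 < δ) (hδ : δ ≤ 1 / 8)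
    (ξ : X → ℝ) (hξ : ∀ x, |ξ x - 1| ≤ δ)
    (h : X → ℝ) (hh : ∀ x, h x = p x * ξ x)
    (qs : X → ℝ) (hqs : ∀ x, 0 < qs x) (hqss : ∑ x, qs x = 1)
    (hmin : ∀ q : X → ℝ, (∀ x, 0 < q x) → (∑ x, q x = 1) →
      (∑ x, (p x * Real.log (h x / (h x + qs x)) + qs x * Real.log (qs x / (qs x + h x)))) ≤
      (∑ x, (p x * Real.log (h x / (h x + q x)) + q x * Real.log (q x / (q x + h x))))) :
    ∀ x, |qs x / p x - 1| ≤ 16 * δ := by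
  have hδ1 : δ < 1 := by linarith
  have hξlb : ∀ z, 1 - δ ≤ ξ z := fun z => by have := (abs_le.mp (hξ z)).1; linarith
  have hξub : ∀ z, ξ z ≤ 1 + δ := fun z => by have := (abs_le.mp (hξ z)).2; linarith
  have hhlb : ∀ z, (1-δ) * p z ≤ h z := fun z => by
    rw [hh z]; nlinarith [hp z, hξlb z]
  have hhub : ∀ z, h z ≤ (1+δ) * p z := fun z => by
    rw [hh z]; nlinarith [hp z, hξub z]
  have hhp : ∀ z, 0 < h z := fun z => lt_of_lt_of_le (by nlinarith [hp z]) (hhlb z)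
  have hslb : 1 - δ ≤ ∑ z, h z := by
    calc 1 - δ = ∑ z, (1-δ) * p z := by rw [← Finset.mul_sum, hps]; ring
    _ ≤ ∑ z, h z := Finset.sum_le_sum fun z _ => hhlb z
  have hsub : ∑ z, h z ≤ 1 + δ := by
    calc ∑ z, h z ≤ ∑ z, (1+δ) * p z := Finset.sum_le_sum fun z _ => hhub z
    _ = 1 + δ := by rw [← Finset.mul_sum, hps]; ring
  -- existence of a coordinate with small qs/h and one with large qs/h
  have hy1 : ∃ y, (1-δ) * qs y ≤ h y := by
    by_contra hcon
    push_neg at hcon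
    have : ∑ z, h z < ∑ z, (1-δ) * qs z :=
      Finset.sum_lt_sum_of_nonempty Finset.univ_nonempty fun z _ => hcon z
    rw [← Finset.mul_sum, hqss] at this
    linarith
  have hy2 : ∃ y, h y ≤ (1+δ) * qs y := by
    by_contra hcon
    push_neg at hcon
    have : ∑ z, (1+δ) * qs z < ∑ z, h z :=
      Finset.sum_lt_sum_of_nonempty Finset.univ_nonempty fun z _ => hcon z
    rw [← Finset.mul_sum, hqss] at this
    linarith
  have key := aux_lagrange p h qs hhp hqs hqss hmin
  intro x
  rw [abs_le]
  constructor
  · -- lower bound: -(16δ) ≤ qs x / p x - 1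
    by_contra hcon
    push_neg at hcon
    have ha : qs x < (1 - 16*δ) * p x := by
      have hcon' : qs x / p x < 1 - 16*δ := by linarith
      exact (div_lt_iff₀ (hp x)).mp hcon'
    have h16 : 16*δ < 1 := by nlinarith [hqs x, hp x]
    obtain ⟨y, hy⟩ := hy2
    have hkey := key x y
    set a := qs x with ha'
    set A := h x with hA'
    set b := qs y with hb'
    set B := h y with hB'
    have hapos := hqs x
    have hApos := hhp x
    have hbpos := hqs y
    have hBpos := hhp y
    have haA : (0:ℝ) < a + A := by linarith
    have hbB : (0:ℝ) < b + B := by linarith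
    have hkey' : Real.log (a/(a+A)) + (A - p x)/(a+A)
        = Real.log (b/(b+B)) + (B - p y)/(b+B) := by
      rw [Real.log_div (ne_of_gt hapos) (ne_of_gt haA),
        Real.log_div (ne_of_gt hbpos) (ne_of_gt hbB)]
      linarith [hkey]
    -- bounds for the x side (small qs x)
    have haA2 : a * (1-δ) ≤ (1-16*δ) * A := by
      have t1 := mul_le_mul_of_nonneg_right ha.le (show (0:ℝ) ≤ 1-δ by linarith)
      have t2 := mul_le_mul_of_nonneg_left (hhlb x) (show (0:ℝ) ≤ 1-16*δ by linarith)
      nlinarith [t1, t2]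
    have L1 : Real.log (a/(a+A)) ≤ Real.log ((1-16*δ)/(2-17*δ)) := by
      apply Real.log_le_log (by positivity)
      rw [div_le_div_iff₀ haA (by linarith)]
      nlinarith [haA2]
    have L2 : (A - p x)/(a+A) ≤ δ/(1-δ) := by
      rw [div_le_div_iff₀ haA (by linarith)]
      have c1 : A - p x ≤ δ * p x := by linarith [hhub x]
      have c2 := mul_le_mul_of_nonneg_right c1 (show (0:ℝ) ≤ 1-δ by linarith)
      have c3 := mul_le_mul_of_nonneg_left (hhlb x) hδ0.le
      nlinarith [c2, c3, mul_pos hδ0 hapos]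
    -- bounds for the y side (large qs y)
    have L3 : -Real.log (2+δ) ≤ Real.log (b/(b+B)) := by
      rw [show -Real.log (2+δ) = Real.log (1/(2+δ)) by
        rw [one_div, Real.log_inv]]
      apply Real.log_le_log (by positivity)
      rw [div_le_div_iff₀ (by linarith) hbB]
      nlinarith [hy]
    have hdd : (0:ℝ) < (1-δ)*(2+δ) := by nlinarith [hδ0, hδ1]
    have L4' : (p y - B)/(b+B) ≤ δ*(1+δ)/((1-δ)*(2+δ)) := by
      rw [div_le_div_iff₀ hbB hdd]
      have c1 : p y - B ≤ δ * p y := by linarith [hhlb y]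
      have c1' := mul_le_mul_of_nonneg_right c1 hdd.le
      have c2 := mul_le_mul_of_nonneg_left (hhlb y)
        (show (0:ℝ) ≤ δ*(2+δ) by positivity)
      have c3 : B*(2+δ) ≤ (1+δ)*(b+B) := by nlinarith [hy]
      have c3' := mul_le_mul_of_nonneg_left c3 hδ0.le
      nlinarith [c1', c2, c3']
    have L4 : -(δ*(1+δ)/((1-δ)*(2+δ))) ≤ (B - p y)/(b+B) := by
      have hid : (B - p y)/(b+B) = -((p y - B)/(b+B)) := by ring
      rw [hid]
      linarith
    have := aux_final2 δ hδ0 h16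
    linarith
  · -- upper bound: qs x / p x - 1 ≤ 16δ
    by_contra hcon
    push_neg at hcon
    have ha : (1 + 16*δ) * p x < qs x := by
      have hcon' : 1 + 16*δ < qs x / p x := by linarith
      exact (lt_div_iff₀ (hp x)).mp hcon'
    obtain ⟨y, hy⟩ := hy1
    have hkey := key x y
    set a := qs x with ha'
    set A := h x with hA'
    set b := qs y with hb'
    set B := h y with hB'
    have hapos := hqs x
    have hApos := hhp x
    have hbpos := hqs y
    have hBpos := hhp y
    have haA : (0:ℝ) < a + A := by linarith
    have hbB : (0:ℝ) < b + B := by linarith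
    have hkey' : Real.log (a/(a+A)) + (A - p x)/(a+A)
        = Real.log (b/(b+B)) + (B - p y)/(b+B) := by
      rw [Real.log_div (ne_of_gt hapos) (ne_of_gt haA),
        Real.log_div (ne_of_gt hbpos) (ne_of_gt hbB)]
      linarith [hkey]
    have haA2 : (1+16*δ) * A ≤ (1+δ) * a := by
      have t1 := mul_le_mul_of_nonneg_left (hhub x) (show (0:ℝ) ≤ 1+16*δ by linarith)
      have t2 := mul_le_mul_of_nonneg_left ha.le (show (0:ℝ) ≤ 1+δ by linarith)
      nlinarith [t1, t2]
    have L1 : Real.log ((1+16*δ)/(2+17*δ)) ≤ Real.log (a/(a+A)) := by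
      apply Real.log_le_log (by positivity)
      rw [div_le_div_iff₀ (by linarith) haA]
      nlinarith [haA2]
    have hdd : (0:ℝ) < (1-δ)*(2+17*δ) := by nlinarith [hδ0, hδ1]
    have L2' : (p x - A)/(a+A) ≤ δ*(1+δ)/((1-δ)*(2+17*δ)) := by
      rw [div_le_div_iff₀ haA hdd]
      have c1 : p x - A ≤ δ * p x := by linarith [hhlb x]
      have c1' := mul_le_mul_of_nonneg_right c1 hdd.le
      have c2 := mul_le_mul_of_nonneg_left (hhlb x)
        (show (0:ℝ) ≤ δ*(2+17*δ) by positivity)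
      have c3 : A*(2+17*δ) ≤ (1+δ)*(a+A) := by nlinarith [haA2]
      have c3' := mul_le_mul_of_nonneg_left c3 hδ0.le
      nlinarith [c1', c2, c3']
    have L2 : -(δ*(1+δ)/((1-δ)*(2+17*δ))) ≤ (A - p x)/(a+A) := by
      have hid : (A - p x)/(a+A) = -((p x - A)/(a+A)) := by ring
      rw [hid]
      linarith
    have L3 : Real.log (b/(b+B)) ≤ -Real.log (2-δ) := by
      rw [show -Real.log (2-δ) = Real.log (1/(2-δ)) by
        rw [one_div, Real.log_inv]]
      apply Real.log_le_log (by positivity)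
      rw [div_le_div_iff₀ hbB (by linarith)]
      nlinarith [hy]
    have L4 : (B - p y)/(b+B) ≤ δ/(1-δ) := by
      rw [div_le_div_iff₀ hbB (by linarith)]
      have c1 : B - p y ≤ δ * p y := by linarith [hhub y]
      have c2 := mul_le_mul_of_nonneg_right c1 (show (0:ℝ) ≤ 1-δ by linarith)
      have c3 := mul_le_mul_of_nonneg_left (hhlb y) hδ0.le
      nlinarith [c2, c3, mul_pos hδ0 hbpos]
    have := aux_final1 δ hδ0 hδ
    linarith
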